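/- Let d ≥ 1 and let k, k' be integers with 1 ≤ k ≤ k' ≤ d. Let x ∈ ℝ^d and let T ⊆ {1,…,d} with |T| = k' be such that |x_i| ≥ |x_j| for every i ∈ T and every j ∉ T (a top-k' index set of x). Let R be a uniformly random subset of T of size k, and define the random vector C(x) ∈ ℝ^d by C(x)_i = (k'/k)·x_i if i ∈ R and C(x)_i = 0 otherwise (the comp-(k,k') compressor, the composition of top-k' and rand-k). Then ‖E[C(x)] − x‖ ≤ √((d − k')/d)·‖x‖ and E[‖C(x) − E[C(x)]‖²] ≤ ((k' − k)/k)·‖x‖². -/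

import Mathlib

open Finset

lemma count_mem_powersetCard {α : Type*} [DecidableEq α] (T : Finset α) (k : ℕ)
    (i : α) (hi : i ∈ T) (hk : 1 ≤ k) :
    ((T.powersetCard k).filter (fun R => i ∈ R)).card = (T.card - 1).choose (k - 1) := by
  rw [← Finset.card_erase_of_mem hi, ← Finset.card_powersetCard]
  apply Finset.card_nbij' (fun R => R.erase i) (fun S => insert i S)
  · intro R hR
    simp only [Finset.mem_coe, mem_filter, mem_powersetCard] at hR
    simp only [Finset.mem_coe, mem_powersetCard]
    refine ⟨fun j hj => Finset.mem_erase.2 ⟨(Finset.mem_erase.1 hj).1,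
      hR.1.1 (Finset.mem_erase.1 hj).2⟩, ?_⟩
    rw [Finset.card_erase_of_mem hR.2, hR.1.2]
  · intro S hS
    simp only [Finset.mem_coe, mem_powersetCard] at hS
    have hiS : i ∉ S := fun h => (Finset.mem_erase.1 (hS.1 h)).1 rfl
    simp only [Finset.mem_coe, mem_filter, mem_powersetCard]
    refine ⟨⟨?_, ?_⟩, Finset.mem_insert_self i S⟩
    · intro j hj
      rcases Finset.mem_insert.1 hj with rfl | hj
      · exact hi
      · exact Finset.mem_of_mem_erase (hS.1 hj)
    · rw [Finset.card_insert_of_notMem hiS, hS.2, Nat.sub_add_cancel hk]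
  · intro R hR
    simp only [Finset.mem_coe, mem_filter] at hR
    exact Finset.insert_erase hR.2
  · intro S hS
    simp only [Finset.mem_coe, mem_powersetCard] at hS
    have hiS : i ∉ S := fun h => (Finset.mem_erase.1 (hS.1 h)).1 rfl
    exact Finset.erase_insert hiS

/-- The comp-(k,k') compressor (top-k' followed by rand-k with rescaling k'/k) has relative
bias `√((d-k')/d)` and relative variance `(k'-k)/k`. -/
theorem comp_compressor_bias_variance
    (d k k' : ℕ) (hk : 1 ≤ k) (hkk' : k ≤ k') (hk'd : k' ≤ d)
    (x : EuclideanSpace ℝ (Fin d)) (T : Finset (Fin d)) (hT : T.card = k')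
    (htop : ∀ i ∈ T, ∀ j ∉ T, |x j| ≤ |x i|)
    (C : Finset (Fin d) → EuclideanSpace ℝ (Fin d))
    (hC : ∀ (R : Finset (Fin d)) (i : Fin d),
      C R i = if i ∈ R then ((k' : ℝ) / k) * x i else 0) :
    let Ps : Finset (Finset (Fin d)) := Finset.powersetCard k T
    let EC : EuclideanSpace ℝ (Fin d) := (Ps.card : ℝ)⁻¹ • ∑ R ∈ Ps, C R
    ‖EC - x‖ ≤ Real.sqrt (((d : ℝ) - k') / d) * ‖x‖ ∧
      (Ps.card : ℝ)⁻¹ * ∑ R ∈ Ps, ‖C R - EC‖ ^ 2 ≤ (((k' : ℝ) - k) / k) * ‖x‖ ^ 2 := by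
  intro Ps EC
  have hk'1 : 1 ≤ k' := hk.trans hkk'
  have hd1 : 1 ≤ d := hk'1.trans hk'd
  have hNcard : Ps.card = k'.choose k := by
    simp [Ps, Finset.card_powersetCard, hT]
  have hNpos : 0 < k'.choose k := Nat.choose_pos hkk'
  have hN0 : ((Ps.card : ℝ)) ≠ 0 := by
    rw [hNcard]; positivity
  have hkR : (k : ℝ) ≠ 0 := by positivity
  -- counting
  have hcnt : ∀ i ∈ T, ((Ps.filter (fun R => i ∈ R)).card : ℕ) = (k' - 1).choose (k - 1) := by
    intro i hi
    rw [count_mem_powersetCard T k i hi hk, hT]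
  have hkeyN : (k' - 1).choose (k - 1) * k' = k'.choose k * k := by
    have h1 : k - 1 + 1 = k := by omega
    have h2 : k' - 1 + 1 = k' := by omega
    have h := Nat.add_one_mul_choose_eq (k' - 1) (k - 1)
    rw [h1, h2] at h
    calc (k' - 1).choose (k - 1) * k' = k' * (k' - 1).choose (k - 1) := Nat.mul_comm _ _
      _ = k'.choose k * k := h
  have hkey : ((k' - 1).choose (k - 1) : ℝ) * k' = (k'.choose k : ℝ) * k := by
    exact_mod_cast hkeyN
  -- membership facts
  have hRsub : ∀ R ∈ Ps, R ⊆ T := fun R hR => (Finset.mem_powersetCard.1 hR).1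
  -- compute EC
  have hECapply : ∀ i : Fin d, EC i = if i ∈ T then x i else 0 := by
    intro i
    have h1 : EC i = (Ps.card : ℝ)⁻¹ * ∑ R ∈ Ps, C R i := by
      show ((Ps.card : ℝ)⁻¹ • ∑ R ∈ Ps, C R) i = _
      rw [PiLp.smul_apply, WithLp.ofLp_sum, Finset.sum_apply]
      simp
    rw [h1]
    by_cases hi : i ∈ T
    · simp only [hi, if_true]
      have h2 : ∑ R ∈ Ps, C R i
          = ((Ps.filter (fun R => i ∈ R)).card : ℝ) * (((k' : ℝ) / k) * x i) := by
        simp only [hC]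
        rw [Finset.sum_ite, Finset.sum_const, Finset.sum_const]
        simp
      rw [h2, hcnt i hi, hNcard]
      field_simp
      linear_combination (x i) * hkey
    · simp only [hi, if_false]
      have h2 : ∑ R ∈ Ps, C R i = 0 := by
        apply Finset.sum_eq_zero
        intro R hR
        rw [hC, if_neg (fun h => hi (hRsub R hR h))]
      rw [h2, mul_zero]
  -- sums of squares
  set Sin : ℝ := ∑ i ∈ T, (x i) ^ 2 with hSin
  set Sout : ℝ := ∑ i ∈ Tᶜ, (x i) ^ 2 with hSout
  have hxnorm : ‖x‖ ^ 2 = Sin + Sout := by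
    rw [EuclideanSpace.norm_eq, Real.sq_sqrt (by positivity)]
    rw [← Finset.sum_add_sum_compl T]
    simp [Real.norm_eq_abs, sq_abs, hSin, hSout]
  have hSinnn : 0 ≤ Sin := Finset.sum_nonneg fun i _ => sq_nonneg _
  have hSoutnn : 0 ≤ Sout := Finset.sum_nonneg fun i _ => sq_nonneg _
  have hTcard : (Tᶜ : Finset (Fin d)).card = d - k' := by
    rw [Finset.card_compl, hT]; simp
  -- key inequality Sout ≤ ((d-k')/d)(Sin+Sout)
  have hTne : T.Nonempty := Finset.card_pos.1 (by omega)
  obtain ⟨i0, hi0, hmin⟩ := T.exists_min_image (fun i => (x i) ^ 2) hTne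
  have hm : 0 ≤ (x i0) ^ 2 := sq_nonneg _
  have hSoutle : Sout ≤ ((d : ℝ) - k') * (x i0) ^ 2 := by
    calc Sout ≤ ∑ _i ∈ Tᶜ, (x i0) ^ 2 := by
          apply Finset.sum_le_sum
          intro j hj
          have := htop i0 hi0 j (Finset.mem_compl.1 hj)
          calc (x j)^2 = |x j|^2 := (sq_abs _).symm
            _ ≤ |x i0|^2 := by apply pow_le_pow_left₀ (abs_nonneg _) this
            _ = (x i0)^2 := sq_abs _
      _ = ((d : ℝ) - k') * (x i0) ^ 2 := by
          rw [Finset.sum_const, hTcard, nsmul_eq_mul]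
          congr 1
          push_cast [Nat.cast_sub hk'd]
          ring
  have hSinge : (k' : ℝ) * (x i0) ^ 2 ≤ Sin := by
    calc (k' : ℝ) * (x i0) ^ 2 = ∑ _i ∈ T, (x i0)^2 := by
          rw [Finset.sum_const, hT, nsmul_eq_mul]
      _ ≤ Sin := Finset.sum_le_sum fun i hi => hmin i hi
  have hdR : (0 : ℝ) < d := by exact_mod_cast hd1
  have hk'R : (1 : ℝ) ≤ k' := by exact_mod_cast hk'1
  have hdk'R : (k' : ℝ) ≤ d := by exact_mod_cast hk'd
  have hkeyineq : Sout ≤ (((d : ℝ) - k') / d) * (Sin + Sout) := by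
    rw [div_mul_eq_mul_div, le_div_iff₀ hdR]
    nlinarith [mul_le_mul_of_nonneg_left hSoutle (by linarith : (0:ℝ) ≤ (k':ℝ)),
      mul_le_mul_of_nonneg_left hSinge (by linarith : (0:ℝ) ≤ (d:ℝ) - k')]
  constructor
  · -- bias
    have hnormEC : ‖EC - x‖ = Real.sqrt Sout := by
      rw [EuclideanSpace.norm_eq]
      congr 1
      rw [← Finset.sum_compl_add_sum T (fun i => ‖(EC - x) i‖ ^ 2)]
      have h1 : ∑ i ∈ T, ‖(EC - x) i‖ ^ 2 = 0 := by
        apply Finset.sum_eq_zero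
        intro i hi
        rw [PiLp.sub_apply, hECapply i]
        simp [hi]
      rw [h1, add_zero]
      apply Finset.sum_congr rfl
      intro i hi
      rw [PiLp.sub_apply, hECapply i]
      simp only [Finset.mem_compl.1 hi, if_false, zero_sub, norm_neg, Real.norm_eq_abs, sq_abs]
    rw [hnormEC]
    calc Real.sqrt Sout ≤ Real.sqrt ((((d : ℝ) - k') / d) * ‖x‖ ^ 2) := by
          apply Real.sqrt_le_sqrt
          rw [hxnorm]; exact hkeyineq
      _ = Real.sqrt (((d : ℝ) - k') / d) * ‖x‖ := by
          rw [Real.sqrt_mul (div_nonneg (by linarith) hdR.le), Real.sqrt_sq (norm_nonneg x)]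
  · -- variance
    have hnormCR : ∀ R ∈ Ps, ‖C R - EC‖ ^ 2
        = ∑ i ∈ T, (if i ∈ R then ((k' : ℝ)/k - 1)^2 * (x i)^2 else (x i)^2) := by
      intro R hR
      rw [EuclideanSpace.norm_eq, Real.sq_sqrt (by positivity)]
      rw [← Finset.sum_subset (Finset.subset_univ T)]
      · apply Finset.sum_congr rfl
        intro i hi
        rw [PiLp.sub_apply, hC, hECapply i]
        by_cases hiR : i ∈ R
        · simp only [hiR, if_true, hi, Real.norm_eq_abs, sq_abs]
          ring
        · simp only [hiR, if_false, hi, if_true, Real.norm_eq_abs, sq_abs]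
          ring
      · intro i _ hiT
        rw [PiLp.sub_apply, hC, hECapply i, if_neg (fun h => hiT (hRsub R hR h)), if_neg hiT]
        simp
    have hsum : ∑ R ∈ Ps, ‖C R - EC‖ ^ 2
        = ∑ i ∈ T, (((k'-1).choose (k-1) : ℝ) * (((k' : ℝ)/k - 1)^2 * (x i)^2)
            + ((k'.choose k : ℝ) - ((k'-1).choose (k-1) : ℝ)) * (x i)^2) := by
      rw [Finset.sum_congr rfl hnormCR, Finset.sum_comm]
      apply Finset.sum_congr rfl
      intro i hi
      rw [Finset.sum_ite, Finset.sum_const, Finset.sum_const]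
      have hc1 : (Ps.filter (fun R => i ∈ R)).card = (k'-1).choose (k-1) := hcnt i hi
      have hc2 : (Ps.filter (fun R => ¬ i ∈ R)).card
          = k'.choose k - (k'-1).choose (k-1) := by
        have := Finset.card_filter_add_card_filter_not (s := Ps)
          (p := fun R => i ∈ R)
        omega
      rw [hc1, hc2, nsmul_eq_mul, nsmul_eq_mul]
      have hle : (k'-1).choose (k-1) ≤ k'.choose k := by
        apply Nat.le_of_mul_le_mul_right _ (show 0 < k' by omega)
        calc (k'-1).choose (k-1) * k' = k'.choose k * k := hkeyN
          _ ≤ k'.choose k * k' := Nat.mul_le_mul_left _ hkk'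
      push_cast [Nat.cast_sub hle]
      ring
    rw [hsum, Finset.mul_sum]
    have hper : ∀ i : Fin d,
        (Ps.card : ℝ)⁻¹ * (((k'-1).choose (k-1) : ℝ) * (((k' : ℝ)/k - 1)^2 * (x i)^2)
            + ((k'.choose k : ℝ) - ((k'-1).choose (k-1) : ℝ)) * (x i)^2)
          = (((k' : ℝ) - k)/k) * (x i)^2 := by
      intro i
      rw [hNcard]
      have hch : (0:ℝ) < (k'.choose k : ℝ) := by exact_mod_cast hNpos
      have hkpos : (0:ℝ) < k := by exact_mod_cast hk
      field_simp
      ring_nf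
      linear_combination ((x i)^2 * (k' - 2*k)) * hkey
    rw [Finset.sum_congr rfl (fun i _ => hper i)]
    rw [← Finset.mul_sum]
    apply mul_le_mul_of_nonneg_left
    · rw [hxnorm]; linarith
    · have h1 : (k : ℝ) ≤ k' := by exact_mod_cast hkk'
      have h2 : (0:ℝ) < k := by exact_mod_cast hk
      exact div_nonneg (by linarith) h2.le
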